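/- A compact Hausdorff space K is monotonically ω-monolithic if and only if it is monotonically monolithic (i.e., monotonically κ-monolithic for every infinite cardinal κ). -/

import Mathlib

open Set Cardinal

universe u

/-- `N` is an external network of `S` in `T`. -/
def IsExternalNetwork (T : Type u) [TopologicalSpace T] (N : Set (Set T)) (S : Set T) : Prop :=
  ∀ a ∈ S, ∀ U : Set T, IsOpen U → a ∈ U → ∃ P ∈ N, a ∈ P ∧ P ⊆ U

/-- `T` is monotonically Sokolov: to each countable family of closed sets one can assign
a continuous retraction keeping each member of the family invariant, together with a
countable external network of the image of the retraction, ω-monotonically. -/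
def MonotonicallySokolov (T : Type u) [TopologicalSpace T] : Prop :=
  ∃ (r : Set (Set T) → T → T) (N : Set (Set T) → Set (Set T)),
    (∀ F : Set (Set T), F.Countable → (∀ A ∈ F, IsClosed A) →
      Continuous (r F) ∧ (∀ x, r F (r F x) = r F x) ∧
      (∀ A ∈ F, ∀ x ∈ A, r F x ∈ A) ∧
      (N F).Countable ∧ IsExternalNetwork T (N F) (Set.range (r F))) ∧
    (∀ F G : Set (Set T), F.Countable → (∀ A ∈ F, IsClosed A) →
      G.Countable → (∀ A ∈ G, IsClosed A) → F ⊆ G → N F ⊆ N G) ∧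
    (∀ s : ℕ → Set (Set T), (∀ n, (s n).Countable) → (∀ n, ∀ A ∈ s n, IsClosed A) →
      (∀ n, s n ⊆ s (n + 1)) → N (⋃ n, s n) = ⋃ n, N (s n))

/-- `T` is monotonically ω-monolithic: to each countable set one can assign a countable
external network of its closure, ω-monotonically. -/
def MonotonicallyOmegaMonolithic (T : Type u) [TopologicalSpace T] : Prop :=
  ∃ O : Set T → Set (Set T),
    (∀ A : Set T, A.Countable → (O A).Countable ∧ IsExternalNetwork T (O A) (closure A)) ∧
    (∀ A B : Set T, A.Countable → B.Countable → A ⊆ B → O A ⊆ O B) ∧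
    (∀ s : ℕ → Set T, (∀ n, (s n).Countable) → (∀ n, s n ⊆ s (n + 1)) →
      O (⋃ n, s n) = ⋃ n, O (s n))

/-- `T` is monotonically `κ`-monolithic. -/
def MonotonicallyKappaMonolithic (T : Type u) [TopologicalSpace T] (κ : Cardinal.{u}) : Prop :=
  ∃ O : Set T → Set (Set T),
    (∀ A : Set T, #A ≤ κ →
      #(O A) ≤ #A + ℵ₀ ∧ IsExternalNetwork T (O A) (closure A)) ∧
    (∀ A B : Set T, #A ≤ κ → #B ≤ κ → A ⊆ B → O A ⊆ O B) ∧
    (∀ (ι : Type u) [LinearOrder ι], #ι ≤ κ →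
      ∀ A : ι → Set T, Monotone A → (∀ i, #(A i) ≤ κ) →
        O (⋃ i, A i) = ⋃ i, O (A i))

/-- `T` is monotonically monolithic: monotonically `κ`-monolithic for every infinite `κ`. -/
def MonotonicallyMonolithic (T : Type u) [TopologicalSpace T] : Prop :=
  ∀ κ : Cardinal.{u}, ℵ₀ ≤ κ → MonotonicallyKappaMonolithic T κ

/-- `T` is a Collins-Roscoe space. -/
def CollinsRoscoe (T : Type u) [TopologicalSpace T] : Prop :=
  ∃ O : T → Set (Set T), (∀ x, (O x).Countable) ∧
    ∀ A : Set T, IsExternalNetwork T (⋃ x ∈ A, O x) (closure A)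

namespace MonoAux

noncomputable section

lemma countable_Iio {β : Ordinal.{u}} (hβ : β < (ℵ₁ : Cardinal.{u}).ord) :
    (Set.Iio β).Countable := by
  have hcard : β.card ≤ ℵ₀ := by
    have := Cardinal.lt_ord.mp hβ
    rwa [← Cardinal.succ_aleph0, Order.lt_succ_iff] at this
  rw [← Set.countable_coe_iff, ← Cardinal.mk_le_aleph0_iff]
  rw [Ordinal.mk_Iio_ordinal]
  exact Cardinal.lift_le_aleph0.mpr hcard

lemma countable_Iic {β : Ordinal.{u}} (hβ : β < (ℵ₁ : Cardinal.{u}).ord) :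
    (Set.Iic β).Countable := by
  have h1 : Order.succ β < (ℵ₁ : Cardinal.{u}).ord :=
    (Cardinal.isSuccLimit_ord (Cardinal.aleph0_le_aleph 1)).succ_lt hβ
  have := countable_Iio h1
  rwa [show Set.Iio (Order.succ β) = Set.Iic β by ext; simp [Order.lt_succ_iff]] at this

/-- the elementary "pressing down"-type lemma over ω₁. -/
lemma exists_uncountable_fiber (f : Ordinal.{u} → Ordinal.{u})
    (hf : ∀ δ, δ < (ℵ₁ : Cardinal.{u}).ord → Order.IsSuccLimit δ → f δ < δ) :
    ∃ β, β < (ℵ₁ : Cardinal.{u}).ord ∧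
      ¬ ({δ : Ordinal.{u} | δ < (ℵ₁ : Cardinal.{u}).ord ∧ Order.IsSuccLimit δ ∧ f δ ≤ β}).Countable := by
  by_contra hcon
  push_neg at hcon
  have hlim : Order.IsSuccLimit ((ℵ₁ : Cardinal.{u}).ord) := Cardinal.isSuccLimit_ord (Cardinal.aleph0_le_aleph 1)
  have hbd : ∀ β, β < (ℵ₁ : Cardinal.{u}).ord → ∃ b, b < (ℵ₁ : Cardinal.{u}).ord ∧
      ∀ δ, δ < (ℵ₁ : Cardinal.{u}).ord → Order.IsSuccLimit δ → f δ ≤ β → δ ≤ b := by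
    intro β hβ
    set S := {δ : Ordinal.{u} | δ < (ℵ₁ : Cardinal.{u}).ord ∧ Order.IsSuccLimit δ ∧ f δ ≤ β} with hS
    have hScnt : S.Countable := hcon β hβ
    rcases S.eq_empty_or_nonempty with hE | hne
    · exact ⟨0, hlim.pos, fun δ h1 h2 h3 => absurd (show δ ∈ S from ⟨h1, h2, h3⟩) (by simp [hE])⟩
    · obtain ⟨e, he⟩ := hScnt.exists_eq_range hne
      refine ⟨⨆ n, e n, ?_, ?_⟩
      · have hω := @Ordinal.iSup_lt_omega_one ℕ _ e
        rw [← Cardinal.ord_aleph] at hω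
        refine hω fun n => ?_
        have : e n ∈ S := by rw [he]; exact mem_range_self n
        exact this.1
      · intro δ h1 h2 h3
        have hδ : δ ∈ S := ⟨h1, h2, h3⟩
        rw [he] at hδ
        obtain ⟨n, rfl⟩ := hδ
        exact Ordinal.le_iSup e n
  choose g hg1 hg2 using hbd
  set G : Ordinal.{u} → Ordinal.{u} :=
    fun β => if h : β < (ℵ₁ : Cardinal.{u}).ord then g β h else 0 with hG
  have hG1 : ∀ β, β < (ℵ₁ : Cardinal.{u}).ord → G β < (ℵ₁ : Cardinal.{u}).ord := by
    intro β h; rw [hG]; simp only [dif_pos h]; exact hg1 β h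
  have hG2 : ∀ β, (hβ : β < (ℵ₁ : Cardinal.{u}).ord) → ∀ δ, δ < (ℵ₁ : Cardinal.{u}).ord →
      Order.IsSuccLimit δ → f δ ≤ β → δ ≤ G β := by
    intro β hβ δ h1 h2 h3; rw [hG]; simp only [dif_pos hβ]; exact hg2 β hβ δ h1 h2 h3
  -- build the diagonal sequence
  set d : ℕ → Ordinal.{u} := fun n => Nat.rec (Ordinal.omega0)
    (fun _ dn => max (Order.succ (G dn)) (Order.succ dn)) n with hd
  have hd0 : d 0 = Ordinal.omega0 := rfl
  have hdsucc : ∀ n, d (n+1) = max (Order.succ (G (d n))) (Order.succ (d n)) := fun n => rfl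
  have hdlt : ∀ n, d n < (ℵ₁ : Cardinal.{u}).ord := by
    intro n
    induction n with
    | zero =>
      rw [hd0, Cardinal.lt_ord]
      simpa using Cardinal.aleph0_lt_aleph_one
    | succ n ih =>
      rw [hdsucc]
      exact max_lt (hlim.succ_lt (hG1 _ ih)) (hlim.succ_lt ih)
  have hdmono : ∀ n, d n < d (n+1) := by
    intro n; rw [hdsucc]
    exact lt_of_lt_of_le (Order.lt_succ _) (le_max_right _ _)
  set δ : Ordinal.{u} := ⨆ n, d n with hδdef
  have hδlt : δ < (ℵ₁ : Cardinal.{u}).ord := by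
    have hω := @Ordinal.iSup_lt_omega_one ℕ _ d
    rw [← Cardinal.ord_aleph] at hω
    exact hω hdlt
  have hled : ∀ n, d n ≤ δ := fun n => Ordinal.le_iSup d n
  have hδlim : Order.IsSuccLimit δ := by
    rw [Ordinal.isSuccLimit_iff, Order.isSuccPrelimit_iff_succ_lt]
    constructor
    · intro h0
      have := hled 0
      rw [h0, hd0] at this
      exact absurd (le_antisymm this zero_le) Ordinal.omega0_ne_zero
    · intro a ha
      obtain ⟨n, hn⟩ := Ordinal.lt_iSup_iff.mp ha
      calc Order.succ a ≤ d n := Order.succ_le_of_lt hn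
        _ < d (n+1) := hdmono n
        _ ≤ δ := hled (n+1)
  have hfδ : f δ < δ := hf δ hδlt hδlim
  obtain ⟨n, hn⟩ := Ordinal.lt_iSup_iff.mp hfδ
  have : δ ≤ G (d n) := hG2 (d n) (hdlt n) δ hδlt hδlim hn.le
  have : δ < d (n+1) := by
    rw [hdsucc]
    exact lt_of_lt_of_le (Order.lt_succ_iff.mpr this) (le_max_left _ _)
  exact absurd (hled (n+1)) (not_le.mpr this)

variable {K : Type u} [TopologicalSpace K] [CompactSpace K] [T2Space K]

lemma tight
    (O : Set K → Set (Set K))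
    (hnet : ∀ A : Set K, A.Countable → (O A).Countable ∧ IsExternalNetwork K (O A) (closure A))
    (hmono : ∀ A B : Set K, A.Countable → B.Countable → A ⊆ B → O A ⊆ O B)
    (hchain : ∀ s : ℕ → Set K, (∀ n, (s n).Countable) → (∀ n, s n ⊆ s (n + 1)) →
      O (⋃ n, s n) = ⋃ n, O (s n))
    (A : Set K) (z : K) (hz : z ∈ closure A) :
    ∃ C, C ⊆ A ∧ C.Countable ∧ z ∈ closure C := by
  classical
  by_contra hcon
  push_neg at hcon
  -- the ω-closed hull of A
  set A' : Set K := ⋃ C : {C : Set K // C ⊆ A ∧ C.Countable}, closure ↑C with hA'def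
  have hsubA' : A ⊆ A' := by
    intro a ha
    exact Set.mem_iUnion.mpr ⟨⟨{a}, Set.singleton_subset_iff.mpr ha, Set.countable_singleton a⟩,
      subset_closure rfl⟩
  have hclA' : ∀ C : Set K, C ⊆ A' → C.Countable → closure C ⊆ A' := by
    intro C hCsub hCcnt
    have hw : ∀ c : C, ∃ D : Set K, D ⊆ A ∧ D.Countable ∧ (c : K) ∈ closure D := by
      rintro ⟨c, hc⟩
      obtain ⟨⟨D, hD1, hD2⟩, hcD⟩ := Set.mem_iUnion.mp (hCsub hc)
      exact ⟨D, hD1, hD2, hcD⟩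
    choose D hD1 hD2 hD3 using hw
    haveI : Countable ↥C := hCcnt.to_subtype
    set E : Set K := ⋃ c : C, D c with hEdef
    have hE1 : E ⊆ A := Set.iUnion_subset fun c => hD1 c
    have hE2 : E.Countable := Set.countable_iUnion fun c => hD2 c
    have hCE : C ⊆ closure E := by
      intro c hc
      exact closure_mono (Set.subset_iUnion D ⟨c, hc⟩) (hD3 ⟨c, hc⟩)
    have : closure C ⊆ closure E := by
      rw [← closure_closure (s := E)]
      exact closure_mono hCE
    intro p hp
    exact Set.mem_iUnion.mpr ⟨⟨E, hE1, hE2⟩, this hp⟩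
  have hzc : z ∈ closure A' := closure_mono hsubA' hz
  have hznA' : z ∉ A' := by
    intro hmem
    obtain ⟨⟨D, hD1, hD2⟩, hzD⟩ := Set.mem_iUnion.mp hmem
    exact hcon D hD1 hD2 hzD
  have hzncl : ∀ C : Set K, C ⊆ A' → C.Countable → z ∉ closure C :=
    fun C h1 h2 hmem => hznA' (hclA' C h1 h2 hmem)
  -- separation gadget
  set sep : Set K → Set K × Set K := fun C =>
    if h : ∃ p : Set K × Set K, IsOpen p.1 ∧ IsOpen p.2 ∧ closure C ⊆ p.1 ∧ z ∈ p.2 ∧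
        Disjoint p.1 p.2
    then h.choose else (∅, Set.univ) with hsepdef
  have sep_spec : ∀ C : Set K, z ∉ closure C →
      IsOpen (sep C).1 ∧ IsOpen (sep C).2 ∧ closure C ⊆ (sep C).1 ∧ z ∈ (sep C).2 ∧
        Disjoint (sep C).1 (sep C).2 := by
    intro C hC
    have hcomp : IsCompact (closure C) := isClosed_closure.isCompact
    obtain ⟨U, Vo, hU, hVo, hCU, hzV, hUV⟩ :=
      SeparatedNhds.of_isCompact_isCompact hcomp isCompact_singleton
        (Set.disjoint_singleton_right.mpr hC)
    have hex : ∃ p : Set K × Set K, IsOpen p.1 ∧ IsOpen p.2 ∧ closure C ⊆ p.1 ∧ z ∈ p.2 ∧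
        Disjoint p.1 p.2 :=
      ⟨(U, Vo), hU, hVo, hCU, Set.singleton_subset_iff.mp hzV, hUV⟩
    rw [hsepdef]
    simp only [dif_pos hex]
    exact hex.choose_spec
  -- the transfinite recursion
  set pick : (Ordinal.{u} → Set K) → K := fun Cf =>
    if h : ∃ p : K, p ∈ A' ∧ ∀ β, p ∉ (sep (Cf β)).1 then h.choose else z with hpickdef
  set x : Ordinal.{u} → K := Ordinal.lt_wf.fix
    (fun α g => pick (fun β => {y | ∃ γ, ∃ hγ : γ < α, γ < β ∧ g γ hγ = y})) with hxdef
  set C : Ordinal.{u} → Set K := fun α => x '' Set.Iio α with hCdef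
  set V : Ordinal.{u} → Set K := fun α => (sep (C α)).1 with hVdef
  set W : Ordinal.{u} → Set K := fun α => (sep (C α)).2 with hWdef
  have hxeq : ∀ α, x α = pick (fun β => C (min β α)) := by
    intro α
    have h0 : x α = Ordinal.lt_wf.fix
        (fun α g => pick (fun β => {y | ∃ γ, ∃ hγ : γ < α, γ < β ∧ g γ hγ = y})) α := by
      rw [hxdef]
    rw [h0, WellFounded.fix_eq]
    congr 1
    funext β
    rw [hCdef]
    ext y
    simp only [Set.mem_setOf_eq, Set.mem_image, Set.mem_Iio, lt_min_iff]
    constructor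
    · rintro ⟨γ, hγα, hγβ, rfl⟩
      exact ⟨γ, ⟨hγβ, hγα⟩, by rw [hxdef]⟩
    · rintro ⟨γ, ⟨hγβ, hγα⟩, rfl⟩
      exact ⟨γ, hγα, hγβ, by rw [hxdef]⟩

  have hCcnt : ∀ γ, γ < (ℵ₁ : Cardinal.{u}).ord → (C γ).Countable := by
    intro γ hγ
    rw [hCdef]
    exact (countable_Iio hγ).image x
  have key : ∀ α, α < (ℵ₁ : Cardinal.{u}).ord → x α ∈ A' ∧ ∀ β, β ≤ α → x α ∉ V β := by
    intro α
    induction α using Ordinal.induction with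
    | h α IH =>
    intro hα
    have hCsub : ∀ γ, γ ≤ α → C γ ⊆ A' := by
      intro γ hγ
      rw [hCdef]
      rintro _ ⟨β, hβ, rfl⟩
      exact (IH β (lt_of_lt_of_le hβ hγ) ((lt_of_lt_of_le hβ hγ).trans hα)).1
    have hzγ : ∀ γ, γ ≤ α → z ∉ closure (C γ) := fun γ h =>
      hzncl _ (hCsub γ h) (hCcnt γ (lt_of_le_of_lt h hα))
    have hVW : ∀ γ, γ ≤ α → IsOpen (V γ) ∧ IsOpen (W γ) ∧ closure (C γ) ⊆ V γ ∧ z ∈ W γ ∧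
        Disjoint (V γ) (W γ) := fun γ h => sep_spec (C γ) (hzγ γ h)
    have hgood : ∃ p : K, p ∈ A' ∧ ∀ β, p ∉ (sep (C (min β α))).1 := by
      haveI : Countable ↥(Set.Iic α) := (countable_Iic hα).to_subtype
      have ha : ∀ u : Finset ↥(Set.Iic α), ∃ p : K, p ∈ A' ∧ ∀ γ ∈ u, p ∈ W ↑γ := by
        intro u
        have hop : IsOpen (⋂ γ ∈ u, W ↑γ) :=
          isOpen_biInter_finset fun γ _ => (hVW ↑γ γ.2).2.1
        have hzin : z ∈ ⋂ γ ∈ u, W ↑γ := by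
          refine Set.mem_biInter fun γ _ => (hVW ↑γ γ.2).2.2.2.1
        obtain ⟨p, hp1, hp2⟩ := mem_closure_iff.mp hzc _ hop hzin
        exact ⟨p, hp2, fun γ hγ => Set.mem_iInter₂.mp hp1 γ hγ⟩
      choose a haA haW using ha
      set D : Set K := Set.range a with hDdef
      have hDcnt : D.Countable := Set.countable_range a
      have hDsub : D ⊆ A' := by
        rintro _ ⟨u, rfl⟩
        exact haA u
      have hclD : IsCompact (closure D) := isClosed_closure.isCompact
      have hfip := hclD.inter_iInter_nonempty
        (fun γ : ↥(Set.Iic α) => closure (W ↑γ ∩ D)) (fun γ => isClosed_closure) ?hfin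
      case hfin =>
        intro u
        refine ⟨a u, subset_closure ⟨u, rfl⟩, ?_⟩
        exact Set.mem_biInter fun γ hγ => subset_closure ⟨haW u γ hγ, ⟨u, rfl⟩⟩
      obtain ⟨p, hp1, hp2⟩ := hfip
      refine ⟨p, hclA' D hDsub hDcnt hp1, ?_⟩
      intro β
      have hmin : min β α ≤ α := min_le_right _ _
      have h1 : p ∈ closure (W (min β α)) :=
        closure_mono Set.inter_subset_left (Set.mem_iInter.mp hp2 ⟨min β α, hmin⟩)
      have hdisj : Disjoint (V (min β α)) (closure (W (min β α))) :=
        ((hVW _ hmin).2.2.2.2).closure_right (hVW _ hmin).1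
      intro hpV
      exact Set.disjoint_left.mp hdisj hpV h1
    have hx : x α = pick (fun β => C (min β α)) := hxeq α
    rw [hpickdef] at hx
    simp only [dif_pos hgood] at hx
    rw [hx]
    obtain ⟨h1, h2⟩ := hgood.choose_spec
    refine ⟨h1, fun β hβ => ?_⟩
    have := h2 β
    rw [min_eq_left hβ] at this
    rw [hVdef]
    exact this

  have hxA : ∀ α, α < (ℵ₁ : Cardinal.{u}).ord → x α ∈ A' := fun α h => (key α h).1
  have hxV : ∀ γ α, γ ≤ α → α < (ℵ₁ : Cardinal.{u}).ord → x α ∉ V γ :=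
    fun γ α h1 h2 => (key α h2).2 γ h1
  have hCsub : ∀ γ, γ < (ℵ₁ : Cardinal.{u}).ord → C γ ⊆ A' := by
    intro γ hγ
    rw [hCdef]
    rintro _ ⟨β, hβ, rfl⟩
    exact hxA β (hβ.trans hγ)
  have hzγ : ∀ γ, γ < (ℵ₁ : Cardinal.{u}).ord → z ∉ closure (C γ) := fun γ h =>
    hzncl _ (hCsub γ h) (hCcnt γ h)
  have hVW : ∀ γ, γ < (ℵ₁ : Cardinal.{u}).ord → IsOpen (V γ) ∧ IsOpen (W γ) ∧
      closure (C γ) ⊆ V γ ∧ z ∈ W γ ∧ Disjoint (V γ) (W γ) :=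
    fun γ h => sep_spec (C γ) (hzγ γ h)
  -- tail sets and freeness
  set T : Ordinal.{u} → Set K := fun γ => x '' {β | γ ≤ β ∧ β < (ℵ₁ : Cardinal.{u}).ord}
    with hTdef
  have htail : ∀ γ, γ < (ℵ₁ : Cardinal.{u}).ord → Disjoint (closure (C γ)) (closure (T γ)) := by
    intro γ hγ
    have h1 : closure (C γ) ⊆ V γ := (hVW γ hγ).2.2.1
    have h2 : closure (T γ) ⊆ (V γ)ᶜ := by
      apply closure_minimal
      · rw [hTdef]
        rintro _ ⟨β, ⟨hβ1, hβ2⟩, rfl⟩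
        exact hxV γ β hβ1 hβ2
      · exact (hVW γ hγ).1.isClosed_compl
    exact Set.disjoint_left.mpr fun p hp1 hp2 => (h2 hp2) (h1 hp1)
  -- cluster points at limit stages
  have hyex : ∀ δ : Ordinal.{u}, ∃ y : K, δ < (ℵ₁ : Cardinal.{u}).ord → Order.IsSuccLimit δ →
      ∀ β, β < δ → y ∈ closure (x '' {ξ | β ≤ ξ ∧ ξ < δ}) := by
    intro δ
    by_cases hδ : δ < (ℵ₁ : Cardinal.{u}).ord ∧ Order.IsSuccLimit δ
    · obtain ⟨hδ1, hδ2⟩ := hδ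
      set E : ↥(Set.Iio δ) → Set K := fun β => closure (x '' {ξ | ↑β ≤ ξ ∧ ξ < δ}) with hEdef
      haveI : Nonempty ↥(Set.Iio δ) := ⟨⟨0, hδ2.pos⟩⟩
      have hdir : Directed (· ⊇ ·) E := by
        intro β β'
        refine ⟨⟨max ↑β ↑β', Set.mem_Iio.mpr (max_lt β.2 β'.2)⟩, ?_, ?_⟩ <;>
        · apply closure_mono
          apply Set.image_mono
          intro ξ hξ
          obtain ⟨h1, h2⟩ := hξ
          exact ⟨le_trans (by simp) h1, h2⟩
      have hne : ∀ β : ↥(Set.Iio δ), (E β).Nonempty := by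
        intro β
        exact ⟨x ↑β, subset_closure ⟨↑β, ⟨le_rfl, β.2⟩, rfl⟩⟩
      obtain ⟨y, hy⟩ := IsCompact.nonempty_iInter_of_directed_nonempty_isCompact_isClosed
        E hdir hne (fun β => isClosed_closure.isCompact) (fun β => isClosed_closure)
      exact ⟨y, fun _ _ β hβ => Set.mem_iInter.mp hy ⟨β, hβ⟩⟩
    · exact ⟨z, fun h1 h2 => absurd ⟨h1, h2⟩ hδ⟩
  choose y hy using hyex
  have hyC : ∀ δ, δ < (ℵ₁ : Cardinal.{u}).ord → Order.IsSuccLimit δ → y δ ∈ closure (C δ) := by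
    intro δ h1 h2
    have := hy δ h1 h2 0 h2.pos
    rw [hCdef]
    convert this using 3
    ext ξ
    simp [zero_le]
  have hynT : ∀ δ, δ < (ℵ₁ : Cardinal.{u}).ord → Order.IsSuccLimit δ → y δ ∉ closure (T δ) := by
    intro δ h1 h2
    exact fun hmem => Set.disjoint_left.mp (htail δ h1) (hyC δ h1 h2) hmem
  -- network elements
  have hPex : ∀ δ : Ordinal.{u}, ∃ P : Set K, δ < (ℵ₁ : Cardinal.{u}).ord → Order.IsSuccLimit δ →
      P ∈ O (C δ) ∧ y δ ∈ P ∧ P ⊆ (closure (T δ))ᶜ := by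
    intro δ
    by_cases hδ : δ < (ℵ₁ : Cardinal.{u}).ord ∧ Order.IsSuccLimit δ
    · obtain ⟨hδ1, hδ2⟩ := hδ
      have hnet' := (hnet (C δ) (hCcnt δ hδ1)).2
      obtain ⟨P, hP1, hP2, hP3⟩ := hnet' (y δ) (hyC δ hδ1 hδ2) (closure (T δ))ᶜ
        isClosed_closure.isOpen_compl (hynT δ hδ1 hδ2)
      exact ⟨P, fun _ _ => ⟨hP1, hP2, hP3⟩⟩
    · exact ⟨∅, fun h1 h2 => absurd ⟨h1, h2⟩ hδ⟩
  choose P hP using hPex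

  -- continuity of O along the chain C at limits
  have hcont : ∀ δ, δ < (ℵ₁ : Cardinal.{u}).ord → Order.IsSuccLimit δ → ∀ Q ∈ O (C δ),
      ∃ β, β < δ ∧ Q ∈ O (C β) := by
    intro δ hδ hlimδ Q hQ
    obtain ⟨e, he⟩ := (countable_Iio (β := δ) (hδ)).exists_eq_range ⟨0, hlimδ.pos⟩
    have helt : ∀ n, e n < δ := by
      intro n
      have : e n ∈ Set.Iio δ := by rw [he]; exact Set.mem_range_self n
      exact this
    set g : ℕ → Ordinal.{u} := fun n => Nat.rec (Order.succ (e 0))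
      (fun n gn => max gn (Order.succ (e (n+1)))) n with hgdef
    have hg0 : g 0 = Order.succ (e 0) := rfl
    have hgs : ∀ n, g (n+1) = max (g n) (Order.succ (e (n+1))) := fun n => rfl
    have hg1 : ∀ n, g n < δ := by
      intro n
      induction n with
      | zero => rw [hg0]; exact hlimδ.succ_lt (helt 0)
      | succ n ih => rw [hgs]; exact max_lt ih (hlimδ.succ_lt (helt (n+1)))
    have hgmono : ∀ n, g n ≤ g (n+1) := fun n => by rw [hgs]; exact le_max_left _ _
    have hge : ∀ n, Order.succ (e n) ≤ g n := by
      intro n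
      cases n with
      | zero => rw [hg0]
      | succ n => rw [hgs]; exact le_max_right _ _
    have hcup : (⋃ n, C (g n)) = C δ := by
      apply Set.Subset.antisymm
      · apply Set.iUnion_subset
        intro n
        rw [hCdef]
        exact Set.image_mono fun ξ hξ => lt_of_lt_of_le hξ (hg1 n).le
      · rw [hCdef]
        rintro _ ⟨ξ, hξ, rfl⟩
        have : ξ ∈ Set.Iio δ := hξ
        rw [he] at this
        obtain ⟨m, hm⟩ := this
        refine Set.mem_iUnion.mpr ⟨m, ⟨ξ, ?_, rfl⟩⟩
        have : ξ < Order.succ (e m) := by rw [hm]; exact Order.lt_succ _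
        exact lt_of_lt_of_le this (hge m)
    have hch := hchain (fun n => C (g n)) (fun n => hCcnt _ ((hg1 n).trans hδ))
      (fun n => by rw [hCdef]; exact Set.image_mono fun ξ hξ => lt_of_lt_of_le hξ (hgmono n))
    rw [hcup] at hch
    rw [hch] at hQ
    obtain ⟨n, hn⟩ := Set.mem_iUnion.mp hQ
    exact ⟨g n, hg1 n, hn⟩
  -- regressive choice of stage
  have hregex : ∀ δ : Ordinal.{u}, ∃ β : Ordinal.{u}, δ < (ℵ₁ : Cardinal.{u}).ord → Order.IsSuccLimit δ →
      β < δ ∧ P δ ∈ O (C β) := by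
    intro δ
    by_cases hδ : δ < (ℵ₁ : Cardinal.{u}).ord ∧ Order.IsSuccLimit δ
    · obtain ⟨hδ1, hδ2⟩ := hδ
      obtain ⟨β, hβ1, hβ2⟩ := hcont δ hδ1 hδ2 (P δ) ((hP δ hδ1 hδ2).1)
      exact ⟨β, fun _ _ => ⟨hβ1, hβ2⟩⟩
    · exact ⟨0, fun h1 h2 => absurd ⟨h1, h2⟩ hδ⟩
  choose f hf using hregex
  obtain ⟨β₀, hβ₀, hbig⟩ := exists_uncountable_fiber f (fun δ h1 h2 => ((hf δ h1 h2).1))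
  set S : Set Ordinal.{u} :=
    {δ : Ordinal.{u} | δ < (ℵ₁ : Cardinal.{u}).ord ∧ Order.IsSuccLimit δ ∧ f δ ≤ β₀} with hSdef
  have hPS : ∀ δ ∈ S, P δ ∈ O (C β₀) := by
    rintro δ ⟨h1, h2, h3⟩
    have hmem := (hf δ h1 h2).2
    refine hmono (C (f δ)) (C β₀) (hCcnt _ (lt_of_le_of_lt h3 hβ₀)) (hCcnt _ hβ₀) ?_ hmem
    rw [hCdef]
    exact Set.image_mono fun ξ hξ => lt_of_lt_of_le hξ h3
  have hOcnt : (O (C β₀)).Countable := (hnet _ (hCcnt _ hβ₀)).1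
  -- collision
  have hQex : ∃ Q ∈ O (C β₀), ¬ ({δ ∈ S | P δ = Q}).Countable := by
    by_contra hq
    push_neg at hq
    apply hbig
    have hsub : S ⊆ ⋃ Q ∈ O (C β₀), {δ ∈ S | P δ = Q} := by
      intro δ hδ
      exact Set.mem_biUnion (hPS δ hδ) ⟨hδ, rfl⟩
    exact Set.Countable.mono hsub (hOcnt.biUnion hq)
  obtain ⟨Q, hQmem, hQbig⟩ := hQex
  have hpair : ∃ δ δ', (δ ∈ S ∧ P δ = Q) ∧ (δ' ∈ S ∧ P δ' = Q) ∧ δ < δ' := by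
    have hnsub : ¬ ({δ ∈ S | P δ = Q}).Subsingleton := fun h => hQbig h.countable
    rw [Set.not_subsingleton_iff] at hnsub
    obtain ⟨δ, hδ, δ', hδ', hne⟩ := hnsub
    rcases lt_or_gt_of_ne hne with h | h
    exacts [⟨δ, δ', hδ, hδ', h⟩, ⟨δ', δ, hδ', hδ, h⟩]
  obtain ⟨δ, δ', ⟨⟨hδ1, hδ2, _⟩, hPδ⟩, ⟨⟨hδ'1, hδ'2, _⟩, hPδ'⟩, hlt⟩ := hpair
  -- final contradiction
  have hy1 : y δ' ∈ closure (x '' {ξ | δ ≤ ξ ∧ ξ < δ'}) := hy δ' hδ'1 hδ'2 δ hlt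
  have hy2 : y δ' ∈ closure (T δ) := by
    refine closure_mono ?_ hy1
    rw [hTdef]
    exact Set.image_mono fun ξ hξ => ⟨hξ.1, hξ.2.trans hδ'1⟩
  have hy3 : y δ' ∈ P δ' := (hP δ' hδ'1 hδ'2).2.1
  rw [hPδ', ← hPδ] at hy3
  exact (hP δ hδ1 hδ2).2.2 hy3 hy2

set_option linter.unusedSectionVars false

theorem backward (hm : MonotonicallyMonolithic K) : MonotonicallyOmegaMonolithic K := by
  obtain ⟨O, h1, h2, h3⟩ := hm ℵ₀ le_rfl
  have cnt : ∀ {A : Set K}, A.Countable → #A ≤ ℵ₀ := fun {A} h => by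
    rw [Cardinal.mk_le_aleph0_iff, Set.countable_coe_iff]; exact h
  refine ⟨O, fun A hA => ⟨?_, (h1 A (cnt hA)).2⟩,
    fun A B hA hB => h2 A B (cnt hA) (cnt hB), fun s hc hmono => ?_⟩
  · rw [← Set.countable_coe_iff, ← Cardinal.mk_le_aleph0_iff]
    calc #(O A) ≤ #A + ℵ₀ := (h1 A (cnt hA)).1
      _ ≤ ℵ₀ + ℵ₀ := add_le_add (cnt hA) le_rfl
      _ = ℵ₀ := Cardinal.aleph0_add_aleph0
  · have hmono' : Monotone s := monotone_nat_of_le_succ (fun n => hmono n)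
    have h := h3 (ULift.{u} ℕ) (by rw [Cardinal.mk_le_aleph0_iff]; infer_instance)
      (fun i => s i.down) (fun i j hij => hmono' (by exact_mod_cast hij))
      (fun i => cnt (hc _))
    rwa [ULift.down_surjective.iUnion_comp (fun n => s n),
      ULift.down_surjective.iUnion_comp (fun n => O (s n))] at h

theorem forward (h : MonotonicallyOmegaMonolithic K) : MonotonicallyMonolithic K := by
  classical
  obtain ⟨O, hnet, hmono, hchain⟩ := h
  intro κ hκ
  refine ⟨fun A => ⋃ F : {F : Finset K // ↑F ⊆ A ∧ F.Nonempty}, O ↑F.1, ?_, ?_, ?_⟩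
  · intro A hA
    constructor
    · -- cardinality bound
      have hind : #{F : Finset K // ↑F ⊆ A ∧ F.Nonempty} ≤ #A + ℵ₀ := by
        have hinj : Function.Injective
            (fun F : {F : Finset K // ↑F ⊆ A ∧ F.Nonempty} =>
              F.1.preimage ((↑) : ↥A → K) (Set.injOn_of_injective Subtype.val_injective)) := by
          rintro ⟨F, hF1, hF2⟩ ⟨G, hG1, hG2⟩ hFG
          simp only at hFG
          simp only [Subtype.mk.injEq]
          ext a
          constructor
          · intro haF
            have : (⟨a, hF1 haF⟩ : ↥A) ∈ F.preimage ((↑) : ↥A → K)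
                (Set.injOn_of_injective Subtype.val_injective) := by
              rw [Finset.mem_preimage]; exact haF
            rw [hFG] at this
            rw [Finset.mem_preimage] at this
            exact this
          · intro haG
            have : (⟨a, hG1 haG⟩ : ↥A) ∈ G.preimage ((↑) : ↥A → K)
                (Set.injOn_of_injective Subtype.val_injective) := by
              rw [Finset.mem_preimage]; exact haG
            rw [← hFG] at this
            rw [Finset.mem_preimage] at this
            exact this
        have h1 : #{F : Finset K // ↑F ⊆ A ∧ F.Nonempty} ≤ #(Finset ↥A) :=
          Cardinal.mk_le_of_injective hinj
        rcases finite_or_infinite ↥A with hfin | hinf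
        · have : #(Finset ↥A) ≤ ℵ₀ := Cardinal.mk_le_aleph0
          exact h1.trans (this.trans (le_add_self))
        · rw [Cardinal.mk_finset_of_infinite] at h1
          exact h1.trans (self_le_add_right _ _)
      calc #(⋃ F : {F : Finset K // ↑F ⊆ A ∧ F.Nonempty}, O ↑F.1)
          ≤ #{F : Finset K // ↑F ⊆ A ∧ F.Nonempty} *
            ⨆ F : {F : Finset K // ↑F ⊆ A ∧ F.Nonempty}, #(O ↑F.1) :=
            Cardinal.mk_iUnion_le _
        _ ≤ (#A + ℵ₀) * ℵ₀ := by
            apply mul_le_mul' hind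
            rcases isEmpty_or_nonempty {F : Finset K // ↑F ⊆ A ∧ F.Nonempty} with hE | hne
            · simp [ciSup_of_empty]
            · refine ciSup_le' fun F => ?_
              rw [Cardinal.mk_le_aleph0_iff, Set.countable_coe_iff]
              exact (hnet _ F.1.countable_toSet).1
        _ = #A + ℵ₀ := Cardinal.mul_eq_left (le_add_self) (le_add_self) Cardinal.aleph0_ne_zero
    · -- external network
      intro a ha U hU haU
      obtain ⟨C, hC1, hC2, hC3⟩ := tight O hnet hmono hchain A a ha
      have hCne : C.Nonempty := by
        rcases C.eq_empty_or_nonempty with rfl | hne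
        · rw [closure_empty] at hC3; exact absurd hC3 (Set.notMem_empty a)
        · exact hne
      obtain ⟨P, hP1, hP2, hP3⟩ := (hnet C hC2).2 a hC3 U hU haU
      obtain ⟨g, hg⟩ := hC2.exists_eq_range hCne
      have hs : ∀ n : ℕ, (g '' Set.Iic n).Countable := fun n => ((Set.finite_Iic n).image g).countable
      have hsm : ∀ n : ℕ, g '' Set.Iic n ⊆ g '' Set.Iic (n+1) :=
        fun n => Set.image_mono (Set.Iic_subset_Iic.mpr (Nat.le_succ n))
      have hcup : (⋃ n, g '' Set.Iic n) = C := by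
        rw [hg]
        apply Set.Subset.antisymm
        · exact Set.iUnion_subset fun n => Set.image_subset_range g _
        · rintro _ ⟨k, rfl⟩
          exact Set.mem_iUnion.mpr ⟨k, ⟨k, Set.mem_Iic.mpr le_rfl, rfl⟩⟩
      have hch := hchain (fun n => g '' Set.Iic n) hs hsm
      rw [hcup] at hch
      rw [hch] at hP1
      obtain ⟨m, hm⟩ := Set.mem_iUnion.mp hP1
      refine ⟨P, ?_, hP2, hP3⟩
      have hFfin : (g '' Set.Iic m).Finite := (Set.finite_Iic m).image g
      refine Set.mem_iUnion.mpr ⟨⟨hFfin.toFinset, ?_, ?_⟩, ?_⟩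
      · rw [Set.Finite.coe_toFinset]
        refine (Set.image_subset_range g _).trans ?_
        rw [← hg]; exact hC1
      · rw [← Finset.coe_nonempty, Set.Finite.coe_toFinset]
        exact ⟨g 0, ⟨0, Set.mem_Iic.mpr (Nat.zero_le m), rfl⟩⟩
      · rw [Set.Finite.coe_toFinset]
        exact hm
  · -- monotone
    intro A B _ _ hAB
    refine Set.iUnion_subset fun F => ?_
    exact Set.subset_iUnion
      (fun G : {F : Finset K // ↑F ⊆ B ∧ F.Nonempty} => O ↑G.1)
      ⟨F.1, F.2.1.trans hAB, F.2.2⟩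
  · -- chain condition
    intro ι _inst hι A hA hAi
    apply Set.Subset.antisymm
    · intro Px hPx
      obtain ⟨F, hF⟩ := Set.mem_iUnion.mp hPx
      have hidx : ∀ a : ↥F.1, ∃ i : ι, (a : K) ∈ A i :=
        fun a => Set.mem_iUnion.mp (F.2.1 a.2)
      choose idx hidxs using hidx
      have hune : (F.1.attach.image idx).Nonempty :=
        Finset.Nonempty.image (Finset.attach_nonempty_iff.mpr F.2.2) idx
      set i0 := (F.1.attach.image idx).max' hune with hi0
      have hsub : ↑F.1 ⊆ A i0 := by
        intro a haF
        have hle : idx ⟨a, haF⟩ ≤ i0 :=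
          Finset.le_max' _ _ (Finset.mem_image_of_mem idx (Finset.mem_attach _ _))
        exact hA hle (hidxs ⟨a, haF⟩)
      refine Set.mem_iUnion.mpr ⟨i0, ?_⟩
      exact Set.mem_iUnion.mpr ⟨⟨F.1, hsub, F.2.2⟩, hF⟩
    · refine Set.iUnion_subset fun i => Set.iUnion_subset fun F => ?_
      exact Set.subset_iUnion
        (fun G : {F : Finset K // ↑F ⊆ (⋃ j, A j) ∧ F.Nonempty} => O ↑G.1)
        ⟨F.1, F.2.1.trans (Set.subset_iUnion A i), F.2.2⟩


end
end MonoAux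

theorem monotonicallyOmegaMonolithic_iff_monotonicallyMonolithic
    (K : Type u) [TopologicalSpace K] [CompactSpace K] [T2Space K] :
    MonotonicallyOmegaMonolithic K ↔ MonotonicallyMonolithic K := by
  exact ⟨MonoAux.forward, MonoAux.backward⟩
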